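/- Let m ≥ 1 and define h : {−1,1}^{2m} → {−1,1} by h(x) = ∏_{i=1}^m x_i if x_{m+1} = x_{m+2} = ⋯ = x_{2m} = 1, and h(x) = 1 otherwise. Then for every integer t ≥ 1, the Fourier tail of h satisfies W^{≥t}[h] ≤ 2^{1−m}. -/

import Mathlib

open scoped Classical

noncomputable section

/-- A `±1` bit, encoded as a unit of `ℤ`. -/
abbrev Bit := ℤˣ

/-- Fourier coefficient `f̂(S) = E_x[f(x) χ_S(x)]`. -/
def walshCoeff {n : ℕ} (f : (Fin n → Bit) → ℝ) (S : Finset (Fin n)) : ℝ :=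
  (∑ x : Fin n → Bit, f x * ∏ i ∈ S, ((x i : ℤ) : ℝ)) / 2 ^ n

/-- The first half `{1, …, m}` of the coordinates of `[2m]`. -/
def firstHalf (m : ℕ) : Finset (Fin (2 * m)) :=
  Finset.univ.filter fun i => (i : ℕ) < m

/-- The "Trojan horse" function: `h(x) = ∏_{i=1}^m x_i` if `x_{m+1} = ⋯ = x_{2m} = 1`,
and `h(x) = 1` otherwise. -/
def trojan (m : ℕ) (x : Fin (2 * m) → Bit) : Bit :=
  if ∀ i : Fin (2 * m), m ≤ (i : ℕ) → x i = 1 then ∏ i ∈ firstHalf m, x i else 1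

end

open Finset

lemma sum_bit (f : Bit → ℝ) : ∑ b : Bit, f b = f 1 + f (-1) := by
  have h : (Finset.univ : Finset ℤˣ) = {1, -1} := rfl
  rw [h, Finset.sum_insert (by decide), Finset.sum_singleton]

lemma sum_pi_prod {n : ℕ} (f : Fin n → Bit → ℝ) :
    ∑ x : Fin n → Bit, ∏ i, f i (x i) = ∏ i, ∑ b : Bit, f i b := by
  rw [Finset.prod_univ_sum (fun _ => (Finset.univ : Finset Bit)) f, Fintype.piFinset_univ]

lemma sum_chi {n : ℕ} (S : Finset (Fin n)) (hS : S.Nonempty) :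
    ∑ x : Fin n → Bit, ∏ i ∈ S, ((x i : ℤ) : ℝ) = 0 := by
  have key : ∀ x : Fin n → Bit, ∏ i ∈ S, ((x i : ℤ) : ℝ) =
      ∏ i, (if i ∈ S then ((x i : ℤ) : ℝ) else 1) := by
    intro x
    rw [Finset.prod_ite_mem, Finset.univ_inter]
  simp_rw [key]
  rw [sum_pi_prod (fun i b => if i ∈ S then ((b : ℤ) : ℝ) else 1)]
  obtain ⟨j, hj⟩ := hS
  apply Finset.prod_eq_zero (Finset.mem_univ j)
  rw [sum_bit]
  simp [hj]

lemma sum_chi_mul {n : ℕ} (x y : Fin n → Bit) :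
    ∑ S : Finset (Fin n), ∏ i ∈ S, (((x i : ℤ) : ℝ) * ((y i : ℤ) : ℝ)) =
      if x = y then (2 : ℝ) ^ n else 0 := by
  have h := Finset.prod_add (fun i => ((x i : ℤ) : ℝ) * ((y i : ℤ) : ℝ))
    (fun _ => (1 : ℝ)) (Finset.univ : Finset (Fin n))
  simp only [Finset.prod_const_one, mul_one, Finset.powerset_univ] at h
  rw [← h]
  split_ifs with hxy
  · subst hxy
    have heach : ∀ i : Fin n, ((x i : ℤ) : ℝ) * ((x i : ℤ) : ℝ) + 1 = 2 := by
      intro i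
      rcases Int.units_eq_one_or (x i) with h1 | h1 <;> simp [h1] <;> norm_num
    calc ∏ i : Fin n, (((x i : ℤ) : ℝ) * ((x i : ℤ) : ℝ) + 1)
        = ∏ _i : Fin n, (2 : ℝ) := Finset.prod_congr rfl fun i _ => heach i
      _ = 2 ^ n := by simp
  · have : ∃ i, x i ≠ y i := by
      by_contra hc; push_neg at hc; exact hxy (funext hc)
    obtain ⟨i, hi⟩ := this
    apply Finset.prod_eq_zero (Finset.mem_univ i)
    have : ((x i : ℤ) : ℝ) * ((y i : ℤ) : ℝ) = -1 := by
      rcases Int.units_eq_one_or (x i) with h1 | h1 <;>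
        rcases Int.units_eq_one_or (y i) with h2 | h2 <;>
          simp_all
    rw [this]; ring

lemma parseval {n : ℕ} (f : (Fin n → Bit) → ℝ) :
    ∑ S : Finset (Fin n), walshCoeff f S ^ 2 = (∑ x : Fin n → Bit, f x ^ 2) / 2 ^ n := by
  have key : ∑ S : Finset (Fin n),
      (∑ x : Fin n → Bit, f x * ∏ i ∈ S, ((x i : ℤ) : ℝ)) ^ 2
      = (∑ x : Fin n → Bit, f x ^ 2) * 2 ^ n := by
    calc ∑ S : Finset (Fin n), (∑ x : Fin n → Bit, f x * ∏ i ∈ S, ((x i : ℤ) : ℝ)) ^ 2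
        = ∑ S : Finset (Fin n), ∑ x : Fin n → Bit, ∑ y : Fin n → Bit,
            (f x * f y) * ∏ i ∈ S, (((x i : ℤ) : ℝ) * ((y i : ℤ) : ℝ)) := by
          refine Finset.sum_congr rfl fun S _ => ?_
          rw [sq, Finset.sum_mul_sum]
          refine Finset.sum_congr rfl fun x _ => Finset.sum_congr rfl fun y _ => ?_
          rw [Finset.prod_mul_distrib]; ring
      _ = ∑ x : Fin n → Bit, ∑ y : Fin n → Bit,
            (f x * f y) * ∑ S : Finset (Fin n), ∏ i ∈ S, (((x i : ℤ) : ℝ) * ((y i : ℤ) : ℝ)) := by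
          rw [Finset.sum_comm]
          refine Finset.sum_congr rfl fun x _ => ?_
          rw [Finset.sum_comm]
          refine Finset.sum_congr rfl fun y _ => ?_
          rw [Finset.mul_sum]
      _ = ∑ x : Fin n → Bit, f x ^ 2 * 2 ^ n := by
          refine Finset.sum_congr rfl fun x _ => ?_
          simp_rw [sum_chi_mul]
          rw [Finset.sum_eq_single x]
          · simp [sq]
          · intro y _ hy
            rw [if_neg (fun h => hy h.symm), mul_zero]
          · intro h; exact absurd (Finset.mem_univ x) h
      _ = (∑ x : Fin n → Bit, f x ^ 2) * 2 ^ n := by rw [← Finset.sum_mul]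
  unfold walshCoeff
  simp_rw [div_pow]
  rw [← Finset.sum_div, key]
  have h2 : ((2 : ℝ) ^ n) ≠ 0 := by positivity
  field_simp

lemma card_firstHalf (m : ℕ) : (firstHalf m).card = m := by
  have h : firstHalf m = Finset.map (Fin.castLEEmb (by omega : m ≤ 2 * m)) Finset.univ := by
    ext i
    simp only [firstHalf, Finset.mem_filter, Finset.mem_univ, true_and, Finset.mem_map,
      Fin.castLEEmb, Function.Embedding.coeFn_mk]
    constructor
    · intro hi
      exact ⟨⟨(i : ℕ), hi⟩, by simp [Fin.castLE, Fin.ext_iff]⟩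
    · rintro ⟨j, rfl⟩
      exact j.isLt
  rw [h, Finset.card_map, Finset.card_univ, Fintype.card_fin]

lemma trojan_cast (m : ℕ) (x : Fin (2 * m) → Bit) :
    ((trojan m x : ℤ) : ℝ) =
      if ∀ i : Fin (2 * m), m ≤ (i : ℕ) → x i = 1
        then ∏ i ∈ firstHalf m, ((x i : ℤ) : ℝ) else 1 := by
  unfold trojan
  split_ifs with h <;> push_cast <;> simp

lemma sum_trojan (m : ℕ) (hm : 1 ≤ m) :
    ∑ x : Fin (2 * m) → Bit, ((trojan m x : ℤ) : ℝ) = 2 ^ (2 * m) - 2 ^ m := by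
  have hcard : Fintype.card (Fin (2 * m) → Bit) = 2 ^ (2 * m) := by
    rw [Fintype.card_fun, show Fintype.card Bit = 2 from rfl, Fintype.card_fin]
  have key : ∀ x : Fin (2 * m) → Bit,
      ((trojan m x : ℤ) : ℝ) =
      (∏ i : Fin (2 * m), (if (i : ℕ) < m then ((x i : ℤ) : ℝ) else if x i = 1 then 1 else 0))
      + 1
      - ∏ i : Fin (2 * m), (if (i : ℕ) < m then (1 : ℝ) else if x i = 1 then 1 else 0) := by
    intro x
    rw [trojan_cast]
    by_cases h : ∀ i : Fin (2 * m), m ≤ (i : ℕ) → x i = 1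
    · rw [if_pos h]
      have e1 : ∏ i : Fin (2 * m), (if (i : ℕ) < m then ((x i : ℤ) : ℝ) else if x i = 1 then 1 else 0)
          = ∏ i ∈ firstHalf m, ((x i : ℤ) : ℝ) := by
        rw [← Finset.prod_filter_mul_prod_filter_not Finset.univ (fun i : Fin (2 * m) => (i : ℕ) < m)]
        have e11 : ∏ i ∈ Finset.univ.filter (fun i : Fin (2 * m) => (i : ℕ) < m),
            (if (i : ℕ) < m then ((x i : ℤ) : ℝ) else if x i = 1 then 1 else 0)
            = ∏ i ∈ firstHalf m, ((x i : ℤ) : ℝ) := by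
          refine Finset.prod_congr rfl fun i hi => ?_
          rw [if_pos ((Finset.mem_filter.1 hi).2)]
        have e12 : ∏ i ∈ Finset.univ.filter (fun i : Fin (2 * m) => ¬ (i : ℕ) < m),
            (if (i : ℕ) < m then ((x i : ℤ) : ℝ) else if x i = 1 then 1 else 0) = 1 := by
          refine Finset.prod_eq_one fun i hi => ?_
          have hi' := (Finset.mem_filter.1 hi).2
          rw [if_neg hi', if_pos (h i (not_lt.1 hi'))]
        rw [e11, e12, mul_one]
      have e2 : ∏ i : Fin (2 * m), (if (i : ℕ) < m then (1 : ℝ) else if x i = 1 then 1 else 0) = 1 := by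
        refine Finset.prod_eq_one fun i _ => ?_
        split_ifs with h1 h2
        · rfl
        · rfl
        · exact absurd (h i (not_lt.1 h1)) h2
      rw [e1, e2]; ring
    · rw [if_neg h]
      push_neg at h
      obtain ⟨i, hi, hxi⟩ := h
      have e1 : ∏ i : Fin (2 * m), (if (i : ℕ) < m then ((x i : ℤ) : ℝ) else if x i = 1 then 1 else 0) = 0 :=
        Finset.prod_eq_zero (Finset.mem_univ i) (by rw [if_neg (not_lt.2 hi), if_neg hxi])
      have e2 : ∏ i : Fin (2 * m), (if (i : ℕ) < m then (1 : ℝ) else if x i = 1 then 1 else 0) = 0 :=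
        Finset.prod_eq_zero (Finset.mem_univ i) (by rw [if_neg (not_lt.2 hi), if_neg hxi])
      rw [e1, e2]; ring
  simp_rw [key]
  rw [Finset.sum_sub_distrib, Finset.sum_add_distrib, Finset.sum_const, Finset.card_univ, hcard,
    sum_pi_prod (fun i b => if (i : ℕ) < m then ((b : ℤ) : ℝ) else if b = 1 then 1 else 0),
    sum_pi_prod (fun i b => if (i : ℕ) < m then (1 : ℝ) else if b = 1 then 1 else 0)]
  have hA : ∏ i : Fin (2 * m), (∑ b : Bit, if (i : ℕ) < m then ((b : ℤ) : ℝ) else if b = 1 then 1 else 0) = 0 := by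
    refine Finset.prod_eq_zero (Finset.mem_univ (⟨0, by omega⟩ : Fin (2 * m))) ?_
    rw [sum_bit]
    norm_num [show 0 < m from hm]
  have hB : ∏ i : Fin (2 * m), (∑ b : Bit, if (i : ℕ) < m then (1 : ℝ) else if b = 1 then 1 else 0) = 2 ^ m := by
    have e : ∀ i : Fin (2 * m), (∑ b : Bit, if (i : ℕ) < m then (1 : ℝ) else if b = 1 then 1 else 0)
        = if (i : ℕ) < m then (2 : ℝ) else 1 := by
      intro i
      rw [sum_bit]
      by_cases h : (i : ℕ) < m
      · rw [if_pos h, if_pos h]; norm_num; exact h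
      · rw [if_neg h, if_neg h, if_pos rfl, if_neg (by decide : ¬(-1 : Bit) = 1)]
        norm_num; exact not_lt.1 h
    simp_rw [e]
    rw [Finset.prod_ite, Finset.prod_const, Finset.prod_const, one_pow, mul_one]
    rw [show Finset.univ.filter (fun i : Fin (2 * m) => (i : ℕ) < m) = firstHalf m from rfl,
      card_firstHalf]
  rw [hA, hB]
  push_cast
  ring

lemma sum_trojan_sq (m : ℕ) (hm : 1 ≤ m) :
    ∑ x : Fin (2 * m) → Bit, (((trojan m x : ℤ) : ℝ) - 1) ^ 2 = 2 * 2 ^ m := by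
  have hcard : Fintype.card (Fin (2 * m) → Bit) = 2 ^ (2 * m) := by
    rw [Fintype.card_fun, show Fintype.card Bit = 2 from rfl, Fintype.card_fin]
  have key : ∀ x : Fin (2 * m) → Bit,
      (((trojan m x : ℤ) : ℝ) - 1) ^ 2 = 2 - 2 * ((trojan m x : ℤ) : ℝ) := by
    intro x
    have hsq : ((trojan m x : ℤ) : ℝ) ^ 2 = 1 := by
      rcases Int.units_eq_one_or (trojan m x) with h | h <;> rw [h] <;> norm_num
    nlinarith [hsq]
  simp_rw [key]
  rw [Finset.sum_sub_distrib, Finset.sum_const, ← Finset.mul_sum, sum_trojan m hm,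
    Finset.card_univ, hcard]
  push_cast
  ring

theorem trojan_tail_bound (m : ℕ) (hm : 1 ≤ m) :
    ∀ t : ℕ, 1 ≤ t →
      (∑ S ∈ Finset.univ.filter (fun S : Finset (Fin (2 * m)) => t ≤ S.card),
          walshCoeff (fun x => ((trojan m x : ℤ) : ℝ)) S ^ 2)
        ≤ (2 : ℝ) ^ ((1 : ℤ) - (m : ℤ)) := by
  intro t ht
  set f : (Fin (2 * m) → Bit) → ℝ := fun x => ((trojan m x : ℤ) : ℝ) with hf
  set g : (Fin (2 * m) → Bit) → ℝ := fun x => f x - 1 with hg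
  have hfg : ∀ S : Finset (Fin (2 * m)), S.Nonempty → walshCoeff f S = walshCoeff g S := by
    intro S hS
    unfold walshCoeff
    congr 1
    have : ∀ x : Fin (2 * m) → Bit, g x * ∏ i ∈ S, ((x i : ℤ) : ℝ)
        = f x * ∏ i ∈ S, ((x i : ℤ) : ℝ) - ∏ i ∈ S, ((x i : ℤ) : ℝ) := by
      intro x; rw [hg]; ring
    simp_rw [this]
    rw [Finset.sum_sub_distrib, sum_chi S hS, sub_zero]
  have step1 : (∑ S ∈ Finset.univ.filter (fun S : Finset (Fin (2 * m)) => t ≤ S.card),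
      walshCoeff f S ^ 2) = ∑ S ∈ Finset.univ.filter (fun S : Finset (Fin (2 * m)) => t ≤ S.card),
      walshCoeff g S ^ 2 := by
    refine Finset.sum_congr rfl fun S hS => ?_
    have hne : S.Nonempty := Finset.card_pos.1 (lt_of_lt_of_le ht (Finset.mem_filter.1 hS).2)
    rw [hfg S hne]
  rw [step1]
  have step2 : (∑ S ∈ Finset.univ.filter (fun S : Finset (Fin (2 * m)) => t ≤ S.card),
      walshCoeff g S ^ 2) ≤ ∑ S : Finset (Fin (2 * m)), walshCoeff g S ^ 2 :=
    Finset.sum_le_sum_of_subset_of_nonneg (Finset.filter_subset _ _)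
      (fun S _ _ => sq_nonneg _)
  refine le_trans step2 ?_
  rw [parseval g]
  have hsum : ∑ x : Fin (2 * m) → Bit, g x ^ 2 = 2 * 2 ^ m := sum_trojan_sq m hm
  rw [hsum]
  have h2m : (2 : ℝ) ^ (2 * m) = 2 ^ m * 2 ^ m := by rw [two_mul, pow_add]
  rw [h2m, zpow_sub₀ (two_ne_zero), zpow_one, zpow_natCast]
  rw [div_le_div_iff₀ (by positivity) (by positivity)]
  ring_nf
  nlinarith [pow_pos (by norm_num : (0:ℝ) < 2) m]
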